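/- Suppose removability is a local property in the following sense: a compact set E ⊆ Ĉ is conformally removable if and only if for every open set U ⊇ E, every homeomorphism f: U → f(U) that is conformal on U \ E is conformal on U. Let G = ⋃_n G_n ∪ {p} be a compact set where the G_n are pairwise disjoint compact conformally removable sets admitting pairwise disjoint open neighborhoods U_n, and p ∉ ⋃_n U_n accumulates the G_n. Then G is conformally removable. -/

import Mathlib

open OnePoint in
open scoped Classical in
/-- Chart coordinate on the Riemann sphere `Ĉ = OnePoint ℂ`: the chart at a finite
point is the identity, the chart at `∞` is `z ↦ 1/z` (sending `∞` to `0`). -/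
noncomputable def sphCoord (c : OnePoint ℂ) (z : OnePoint ℂ) : ℂ :=
  if c = ∞ then Option.elim z 0 (fun x => x⁻¹) else Option.elim z 0 id

open OnePoint in
open scoped Classical in
/-- Inverse chart at `c`: at a finite point it is the inclusion `ℂ → Ĉ`, at `∞`
it is `z ↦ 1/z` (sending `0` to `∞`). -/
noncomputable def sphCoordInv (c : OnePoint ℂ) (z : ℂ) : OnePoint ℂ :=
  if c = ∞ then (if z = 0 then ∞ else ((z⁻¹ : ℂ) : OnePoint ℂ)) else (z : OnePoint ℂ)

/-- The coordinate of a point in its own chart. -/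
noncomputable def sphVal (c : OnePoint ℂ) : ℂ := sphCoord c c

/-- A map of the Riemann sphere is holomorphic (conformal) at a point `a` if it is
continuous at `a` and, read in the charts at `a` and `f a`, is analytic. -/
def SphHolomorphicAt (f : OnePoint ℂ → OnePoint ℂ) (a : OnePoint ℂ) : Prop :=
  ContinuousAt f a ∧
    AnalyticAt ℂ (fun z : ℂ => sphCoord (f a) (f (sphCoordInv a z))) (sphVal a)

/-- A compact set `E ⊆ Ĉ` is conformally removable if every homeomorphism of the
Riemann sphere that is conformal (holomorphic and injective) off `E` is conformal
everywhere (equivalently, is a Möbius transformation). -/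
def ConformallyRemovable (E : Set (OnePoint ℂ)) : Prop :=
  ∀ f : OnePoint ℂ ≃ₜ OnePoint ℂ,
    (∀ z ∉ E, SphHolomorphicAt f z) → ∀ z : OnePoint ℂ, SphHolomorphicAt f z

section Helpers

open OnePoint Set Topology Filter Bornology

lemma sphCoord_of_ne {c : OnePoint ℂ} (hc : c ≠ ∞) :
    sphCoord c = fun z => Option.elim z 0 id := by
  funext z; simp [sphCoord, hc]

lemma sphCoord_infty_eq (z : OnePoint ℂ) :
    sphCoord ∞ z = (Option.elim z 0 id)⁻¹ := by
  simp only [sphCoord, if_pos rfl]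
  cases z with
  | infty => exact inv_zero.symm
  | coe x => rfl

lemma sphCoordInv_of_ne {c : OnePoint ℂ} (hc : c ≠ ∞) :
    sphCoordInv c = fun z : ℂ => (z : OnePoint ℂ) := by
  funext z; simp [sphCoordInv, hc]

lemma sphCoordInv_infty {z : ℂ} (hz : z ≠ 0) :
    sphCoordInv ∞ z = ((z⁻¹ : ℂ) : OnePoint ℂ) := by
  simp [sphCoordInv, hz]

lemma sphVal_coe (x : ℂ) : sphVal (x : OnePoint ℂ) = x := by
  simp [sphVal, sphCoord_of_ne (OnePoint.coe_ne_infty x)]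
  rfl

lemma sphVal_infty : sphVal (∞ : OnePoint ℂ) = 0 := by
  simp [sphVal, sphCoord]
  rfl

lemma sphCoordInv_sphVal (a : OnePoint ℂ) : sphCoordInv a (sphVal a) = a := by
  cases a with
  | infty =>
    show sphCoordInv ∞ (sphVal ∞) = ∞
    rw [sphVal_infty]; simp [sphCoordInv]
  | coe x =>
    show sphCoordInv (x : OnePoint ℂ) (sphVal (x : OnePoint ℂ)) = (x : OnePoint ℂ)
    rw [sphVal_coe, sphCoordInv_of_ne (OnePoint.coe_ne_infty x)]

lemma sphCoordInv_ne_self {p : OnePoint ℂ} {z : ℂ} (hz : z ≠ sphVal p) :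
    sphCoordInv p z ≠ p := by
  cases p with
  | infty =>
    show sphCoordInv ∞ z ≠ ∞
    rw [sphVal_infty] at hz
    rw [sphCoordInv_infty hz]
    exact OnePoint.coe_ne_infty _
  | coe x =>
    show sphCoordInv (x : OnePoint ℂ) z ≠ (x : OnePoint ℂ)
    rw [sphVal_coe] at hz
    rw [sphCoordInv_of_ne (OnePoint.coe_ne_infty x)]
    exact fun h => hz (OnePoint.coe_eq_coe.mp h)

lemma coclosedCompact_complex_eq : coclosedCompact ℂ = cobounded ℂ := by
  rw [Filter.coclosedCompact_eq_cocompact, ← Metric.cobounded_eq_cocompact]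

lemma tendsto_sphCoordInv (p : OnePoint ℂ) :
    Filter.Tendsto (sphCoordInv p) (nhds (sphVal p)) (nhds p) := by
  cases p with
  | infty =>
    show Filter.Tendsto (sphCoordInv ∞) (nhds (sphVal ∞)) (nhds ∞)
    rw [sphVal_infty, ← nhdsNE_sup_pure]
    refine Filter.Tendsto.sup ?_ ?_
    · have h1 : Filter.Tendsto (fun z : ℂ => ((z⁻¹ : ℂ) : OnePoint ℂ)) (nhdsWithin 0 {(0:ℂ)}ᶜ)
          (nhds (∞ : OnePoint ℂ)) := by
        refine OnePoint.tendsto_coe_infty.comp ?_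
        rw [coclosedCompact_complex_eq]
        exact tendsto_inv₀_nhdsNE_zero
      refine h1.congr' ?_
      filter_upwards [self_mem_nhdsWithin] with z hz
      exact (sphCoordInv_infty hz).symm
    · have : sphCoordInv ∞ (0:ℂ) = (∞ : OnePoint ℂ) := by simp [sphCoordInv]
      simpa [this] using tendsto_pure_nhds (sphCoordInv (∞ : OnePoint ℂ)) (0:ℂ)
  | coe x =>
    show Filter.Tendsto (sphCoordInv (x : OnePoint ℂ)) (nhds (sphVal (x : OnePoint ℂ))) _
    rw [sphVal_coe, sphCoordInv_of_ne (OnePoint.coe_ne_infty x)]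
    exact (OnePoint.continuous_coe.tendsto x)

lemma continuousAt_sphCoord_self (q : OnePoint ℂ) : ContinuousAt (sphCoord q) q := by
  cases q with
  | infty =>
    show ContinuousAt (sphCoord ∞) ∞
    have hval : sphCoord (∞ : OnePoint ℂ) ∞ = 0 := by simp [sphCoord]; rfl
    rw [ContinuousAt, hval, OnePoint.nhds_infty_eq]
    refine Filter.Tendsto.sup ?_ ?_
    · rw [Filter.tendsto_map'_iff]
      have : (sphCoord (∞ : OnePoint ℂ)) ∘ (fun x : ℂ => (x : OnePoint ℂ)) =
          fun x : ℂ => x⁻¹ := by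
        funext z
        simp only [Function.comp_apply, sphCoord, if_pos rfl]
        rfl
      rw [this, coclosedCompact_complex_eq]
      exact tendsto_inv₀_cobounded
    · simpa [hval] using tendsto_pure_nhds (sphCoord (∞ : OnePoint ℂ)) (∞ : OnePoint ℂ)
  | coe x =>
    show ContinuousAt (sphCoord (x : OnePoint ℂ)) (x : OnePoint ℂ)
    have hval : sphCoord ((x : OnePoint ℂ)) (x : OnePoint ℂ) = x := sphVal_coe x
    rw [ContinuousAt, hval, OnePoint.nhds_coe_eq, Filter.tendsto_map'_iff]
    have : (sphCoord ((x : OnePoint ℂ))) ∘ (fun y : ℂ => (y : OnePoint ℂ)) = fun y : ℂ => y := by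
      funext z; rw [sphCoord_of_ne (OnePoint.coe_ne_infty x)]; rfl
    rw [this]
    exact tendsto_id

/-- Changing the target chart of an analytic chart-read map. -/
lemma sph_transfer {f : OnePoint ℂ → OnePoint ℂ} {a : OnePoint ℂ} (c : OnePoint ℂ)
    (ha : AnalyticAt ℂ (fun z : ℂ => sphCoord (f a) (f (sphCoordInv a z))) (sphVal a))
    (h1 : f a ≠ ∞) (h2 : c = ∞ → f a ≠ ((0 : ℂ) : OnePoint ℂ)) :
    AnalyticAt ℂ (fun z : ℂ => sphCoord c (f (sphCoordInv a z))) (sphVal a) := by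
  by_cases hc : c = ∞
  · subst hc
    have key : (fun z : ℂ => sphCoord ∞ (f (sphCoordInv a z))) =
        fun z : ℂ => (sphCoord (f a) (f (sphCoordInv a z)))⁻¹ := by
      funext z
      rw [sphCoord_of_ne h1, sphCoord_infty_eq]
    rw [key]
    refine ha.inv ?_
    rw [sphCoordInv_sphVal]
    obtain ⟨x, hx⟩ := OnePoint.ne_infty_iff_exists.mp h1
    rw [← hx]
    show sphVal ((x : ℂ) : OnePoint ℂ) ≠ 0
    rw [sphVal_coe]
    intro h0
    exact h2 rfl (by rw [← hx, h0])
  · have key : (fun z : ℂ => sphCoord c (f (sphCoordInv a z))) =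
        fun z : ℂ => sphCoord (f a) (f (sphCoordInv a z)) := by
      funext z
      rw [sphCoord_of_ne hc, sphCoord_of_ne h1]
    rw [key]
    exact ha

/-- Removable singularity for sphere maps: if `f` is continuous at `p`, injective near `p`,
and holomorphic on a punctured neighborhood of `p`, then it is holomorphic at `p`. -/
lemma sph_removable_point (f : OnePoint ℂ → OnePoint ℂ) (p : OnePoint ℂ)
    (V : Set (OnePoint ℂ)) (hV : IsOpen V) (hpV : p ∈ V)
    (hcont : ContinuousAt f p)
    (hinj : ∀ a ∈ V, a ≠ p → f a ≠ f p)
    (hholo : ∀ a ∈ V, a ≠ p → SphHolomorphicAt f a) :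
    SphHolomorphicAt f p := by
  refine ⟨hcont, ?_⟩
  set z₀ := sphVal p with hz₀
  set g := fun z : ℂ => sphCoord (f p) (f (sphCoordInv p z)) with hgdef
  have Tι : Filter.Tendsto (sphCoordInv p) (nhds z₀) (nhds p) := tendsto_sphCoordInv p
  have Tf : Filter.Tendsto (fun z : ℂ => f (sphCoordInv p z)) (nhds z₀) (nhds (f p)) :=
    hcont.tendsto.comp Tι
  -- eventual conditions on the punctured neighborhood
  have E1 : ∀ᶠ z in nhdsWithin z₀ {z₀}ᶜ, sphCoordInv p z ∈ V :=
    (Tι.eventually (hV.eventually_mem hpV)).filter_mono nhdsWithin_le_nhds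
  have E2 : ∀ᶠ z in nhdsWithin z₀ {z₀}ᶜ, sphCoordInv p z ≠ p := by
    filter_upwards [self_mem_nhdsWithin] with z hz
    exact sphCoordInv_ne_self hz
  have E3 : ∀ᶠ z in nhdsWithin z₀ {z₀}ᶜ,
      (f p = ∞ → f (sphCoordInv p z) ≠ ((0 : ℂ) : OnePoint ℂ)) ∧
      (f p ≠ ∞ → f (sphCoordInv p z) ≠ ∞) := by
    by_cases hfp : f p = ∞
    · have hne : f p ≠ ((0 : ℂ) : OnePoint ℂ) := by
        rw [hfp]; exact (OnePoint.coe_ne_infty (0 : ℂ)).symm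
      have := Tf.eventually (eventually_ne_nhds hne)
      exact (this.mono (fun z hz => ⟨fun _ => hz, fun h => absurd hfp h⟩)).filter_mono
        nhdsWithin_le_nhds
    · have := Tf.eventually (eventually_ne_nhds hfp)
      exact (this.mono (fun z hz => ⟨fun h => absurd h hfp, fun _ => hz⟩)).filter_mono
        nhdsWithin_le_nhds
  have Eall := (E1.and (E2.and E3))
  rw [eventually_nhdsWithin_iff] at Eall
  obtain ⟨s, hs_mem, hs_prop⟩ := Filter.eventually_iff_exists_mem.mp Eall
  -- analyticity at each punctured point
  have hdiff : ∀ z ∈ s \ {z₀}, AnalyticAt ℂ g z := by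
    rintro z ⟨hzs, hzne⟩
    simp only [Set.mem_singleton_iff] at hzne
    obtain ⟨haV, hanep, hE3⟩ := hs_prop z hzs hzne
    set a := sphCoordInv p z with hadef
    obtain ⟨_, hA⟩ := hholo a haV hanep
    have h1 : f a ≠ ∞ := by
      by_cases hfp : f p = ∞
      · rw [← hfp]; exact hinj a haV hanep
      · exact hE3.2 hfp
    have hT := sph_transfer (f p) hA h1 hE3.1
    clear hA
    cases hp : p with
    | infty =>
      -- p = ∞, z₀ = 0, a = coe (z⁻¹)
      rw [hp] at hadef
      have hz0 : z ≠ 0 := by rw [hz₀, hp, sphVal_infty] at hzne; exact hzne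
      have ha_eq : a = ((z⁻¹ : ℂ) : OnePoint ℂ) := by rw [hadef, sphCoordInv_infty hz0]
      have hval : sphVal a = z⁻¹ := by rw [ha_eq, sphVal_coe]
      have hιa : sphCoordInv a = fun w : ℂ => (w : OnePoint ℂ) := by
        rw [ha_eq]; exact sphCoordInv_of_ne (OnePoint.coe_ne_infty _)
      rw [hval, hιa] at hT
      have hInv : AnalyticAt ℂ (fun w : ℂ => w⁻¹) z := analyticAt_inv hz0
      have hcomp : AnalyticAt ℂ
          ((fun w : ℂ => sphCoord (f p) (f ((w : OnePoint ℂ)))) ∘ (fun w : ℂ => w⁻¹)) z :=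
        AnalyticAt.comp hT hInv
      refine hcomp.congr ?_
      have hmem : {(0 : ℂ)}ᶜ ∈ nhds z := compl_singleton_mem_nhds hz0
      filter_upwards [hmem] with w hw
      show sphCoord (f p) (f ((w⁻¹ : ℂ) : OnePoint ℂ)) = g w
      rw [hgdef]
      simp only []
      rw [hp, sphCoordInv_infty (by simpa using hw)]
    | coe x =>
      -- p finite: charts at a and p coincide
      rw [hp] at hadef
      have ha_eq : a = ((z : ℂ) : OnePoint ℂ) := by
        rw [hadef, sphCoordInv_of_ne (OnePoint.coe_ne_infty x)]
      have hval : sphVal a = z := by rw [ha_eq, sphVal_coe]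
      have hιa : sphCoordInv a = sphCoordInv p := by
        rw [ha_eq, hp, sphCoordInv_of_ne (OnePoint.coe_ne_infty z),
          sphCoordInv_of_ne (OnePoint.coe_ne_infty x)]
      rw [hval, hιa] at hT
      exact hT
  have hdOn : DifferentiableOn ℂ g (s \ {z₀}) := fun z hz =>
    ((hdiff z hz).differentiableAt).differentiableWithinAt
  have hcg : ContinuousAt g z₀ := by
    have hι : ContinuousAt (sphCoordInv p) z₀ := by
      rw [ContinuousAt, sphCoordInv_sphVal]; exact Tι
    have hφ : ContinuousAt (sphCoord (f p)) (f p) := continuousAt_sphCoord_self (f p)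
    have hf' : ContinuousAt f (sphCoordInv p z₀) := by
      rw [sphCoordInv_sphVal]; exact hcont
    have hφ' : ContinuousAt (sphCoord (f p)) (f (sphCoordInv p z₀)) := by
      rw [sphCoordInv_sphVal]; exact hφ
    exact (hφ'.comp hf').comp hι
  have hdo : DifferentiableOn ℂ g s :=
    (Complex.differentiableOn_compl_singleton_and_continuousAt_iff hs_mem).mp ⟨hdOn, hcg⟩
  exact hdo.analyticAt hs_mem

/-- Restricting an open-embedding restriction to a smaller open set. -/
lemma restrict_isOpenEmbedding {f : OnePoint ℂ → OnePoint ℂ} {Uu W : Set (OnePoint ℂ)}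
    (hU : IsOpen Uu) (hW : IsOpen W) (hWU : W ⊆ Uu)
    (h : Topology.IsOpenEmbedding (Uu.restrict f)) :
    Topology.IsOpenEmbedding (W.restrict f) := by
  have h1 : Topology.IsOpenEmbedding (Subtype.val : W → OnePoint ℂ) :=
    hW.isOpenEmbedding_subtypeVal
  have h2 : Topology.IsOpenEmbedding (Subtype.val : Uu → OnePoint ℂ) :=
    hU.isOpenEmbedding_subtypeVal
  have hcomp : (Subtype.val : Uu → OnePoint ℂ) ∘ Set.inclusion hWU =
      (Subtype.val : W → OnePoint ℂ) := rfl
  have hincl : Topology.IsOpenEmbedding (Set.inclusion hWU) :=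
    Topology.IsOpenEmbedding.of_comp _ h2 (by rw [hcomp]; exact h1)
  have hre : W.restrict f = (Uu.restrict f) ∘ Set.inclusion hWU := rfl
  rw [hre]
  exact h.comp hincl

end Helpers

/-- Assuming the locality characterization of conformal removability (Younsi), a
compact set `G = (⋃ n, G n) ∪ {p}` formed from pairwise disjoint compact removable
sets `G n` with pairwise disjoint open neighborhoods `U n` avoiding the accumulation
point `p` is conformally removable. -/
theorem union_accumulating_removable_sets_removable
    (hloc : ∀ E : Set (OnePoint ℂ), IsCompact E →
      (ConformallyRemovable E ↔
        ∀ U : Set (OnePoint ℂ), IsOpen U → E ⊆ U →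
          ∀ f : OnePoint ℂ → OnePoint ℂ, Topology.IsOpenEmbedding (U.restrict f) →
            (∀ z ∈ U \ E, SphHolomorphicAt f z) → ∀ z ∈ U, SphHolomorphicAt f z))
    (G : ℕ → Set (OnePoint ℂ)) (hGc : ∀ n, IsCompact (G n))
    (hGrem : ∀ n, ConformallyRemovable (G n))
    (hGdisj : ∀ m n, m ≠ n → Disjoint (G m) (G n))
    (U : ℕ → Set (OnePoint ℂ)) (hUopen : ∀ n, IsOpen (U n))
    (hGU : ∀ n, G n ⊆ U n)
    (hUdisj : ∀ m n, m ≠ n → Disjoint (U m) (U n))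
    (p : OnePoint ℂ) (hpU : p ∉ ⋃ n, U n) (hpacc : p ∈ closure (⋃ n, G n))
    (hGcompact : IsCompact ((⋃ n, G n) ∪ {p})) :
    ConformallyRemovable ((⋃ n, G n) ∪ {p}) := by
  rw [hloc _ hGcompact]
  intro Uu hUo hEU f hfOE hfh
  have hfcont : ContinuousOn f Uu :=
    continuousOn_iff_continuous_restrict.mpr hfOE.continuous
  have hfinj : ∀ a ∈ Uu, ∀ b ∈ Uu, f a = f b → a = b := by
    intro a ha b hb hab
    have := hfOE.injective
      (show Uu.restrict f ⟨a, ha⟩ = Uu.restrict f ⟨b, hb⟩ from hab)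
    exact Subtype.ext_iff.mp this
  -- holomorphy at points of the G n inside Uu
  have key : ∀ z ∈ Uu, z ∈ (⋃ n, G n) → SphHolomorphicAt f z := by
    intro z hzU hzG
    obtain ⟨n, hzn⟩ := Set.mem_iUnion.mp hzG
    have hsub : G n ⊆ Uu ∩ U n :=
      Set.subset_inter (fun x hx => hEU (Or.inl (Set.mem_iUnion.mpr ⟨n, hx⟩))) (hGU n)
    have hopen : IsOpen (Uu ∩ U n) := hUo.inter (hUopen n)
    have hOE : Topology.IsOpenEmbedding ((Uu ∩ U n).restrict f) :=
      restrict_isOpenEmbedding hUo hopen Set.inter_subset_left hfOE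
    refine (hloc (G n) (hGc n)).mp (hGrem n) (Uu ∩ U n) hopen hsub f hOE ?_ z
      ⟨hzU, hGU n hzn⟩
    rintro a ⟨⟨haU, haUn⟩, haG⟩
    refine hfh a ⟨haU, ?_⟩
    rintro (haGs | hap)
    · obtain ⟨m, ham⟩ := Set.mem_iUnion.mp haGs
      by_cases hmn : m = n
      · exact haG (hmn ▸ ham)
      · exact (hUdisj m n hmn).le_bot ⟨hGU m ham, haUn⟩
    · rw [Set.mem_singleton_iff] at hap
      exact hpU (Set.mem_iUnion.mpr ⟨n, hap ▸ haUn⟩)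
  intro z hzU
  by_cases hzp : z = p
  · subst hzp
    have hzV : z ∈ Uu := hzU
    refine sph_removable_point f z Uu hUo hzV (hfcont.continuousAt (hUo.mem_nhds hzV)) ?_ ?_
    · intro a haU hanez hfa
      exact hanez (hfinj a haU z hzV hfa)
    · intro a haU hanez
      by_cases haE : a ∈ (⋃ n, G n) ∪ {z}
      · rcases haE with haG | hap
        · exact key a haU haG
        · exact absurd (Set.mem_singleton_iff.mp hap) hanez
      · exact hfh a ⟨haU, haE⟩
  · by_cases hzE : z ∈ (⋃ n, G n) ∪ {p}
    · rcases hzE with hzG | hzpp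
      · exact key z hzU hzG
      · exact absurd (Set.mem_singleton_iff.mp hzpp) hzp
    · exact hfh z ⟨hzU, hzE⟩
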